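/- Let X and Y be nonempty closed convex subsets of R^n with a common point x̄ and r > 0 such that the closed ball B(x̄, r) is contained in X ∩ Y. Then for all x ∈ X and y ∈ Y, dist((x,y), L) ≤ (1 + (‖x - x̄‖ + ‖y - x̄‖)/r)·‖x - y‖, where L = {(u,u) : u ∈ X ∩ Y} ⊆ R^n × R^n. -/

import Mathlib

set_option maxHeartbeats 1000000 in
open Metric in
/-- Error bound for the alternating-projections objective: the distance (in the
Euclidean norm on the product) from `(x, y)` to the diagonal embedding `L` of
`X ∩ Y` is bounded by `(1 + (‖x - x̄‖ + ‖y - x̄‖)/r) · ‖x - y‖`. -/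
theorem error_bound_convex_intersection {n : ℕ}
    (X Y : Set (EuclideanSpace ℝ (Fin n)))
    (hXne : X.Nonempty) (hYne : Y.Nonempty)
    (hXc : IsClosed X) (hYc : IsClosed Y)
    (hXconv : Convex ℝ X) (hYconv : Convex ℝ Y)
    (xbar : EuclideanSpace ℝ (Fin n)) (r : ℝ) (hr : 0 < r)
    (hball : closedBall xbar r ⊆ X ∩ Y)
    (L : Set (WithLp 2 (EuclideanSpace ℝ (Fin n) × EuclideanSpace ℝ (Fin n))))
    (hL : L = {p | ∃ u ∈ X ∩ Y,
      p = (WithLp.equiv 2 (EuclideanSpace ℝ (Fin n) × EuclideanSpace ℝ (Fin n))).symm (u, u)}) :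
    ∀ x ∈ X, ∀ y ∈ Y,
      infDist ((WithLp.equiv 2 (EuclideanSpace ℝ (Fin n) × EuclideanSpace ℝ (Fin n))).symm (x, y)) L
        ≤ (1 + (‖x - xbar‖ + ‖y - xbar‖) / r) * ‖x - y‖ := by
  intro x hx y hy
  set e := (WithLp.equiv 2 (EuclideanSpace ℝ (Fin n) × EuclideanSpace ℝ (Fin n))).symm with he
  set a := ‖x - xbar‖ with ha
  set b := ‖y - xbar‖ with hb
  set d := ‖x - y‖ with hd
  have hd0 : 0 ≤ d := norm_nonneg _
  have ha0 : 0 ≤ a := norm_nonneg _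
  have hb0 : 0 ≤ b := norm_nonneg _
  have hRHS0 : 0 ≤ (1 + (a + b) / r) * d := by positivity
  rcases eq_or_lt_of_le hd0 with hdz | hdpos
  · -- degenerate case x = y
    have hxy : x = y := sub_eq_zero.mp (norm_eq_zero.mp hdz.symm)
    have hmem : e (x, y) ∈ L := by
      rw [hL]
      exact ⟨x, ⟨hx, hxy ▸ hy⟩, by rw [hxy]⟩
    have := infDist_zero_of_mem hmem
    rw [this]; exact hRHS0
  · set s := d + 2 * r with hs
    have hspos : 0 < s := by positivity
    have hsne : s ≠ 0 := ne_of_gt hspos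
    have hdne : d ≠ 0 := ne_of_gt hdpos
    set u : EuclideanSpace ℝ (Fin n) := (r/s) • x + ((r/s) • y + (d/s) • xbar) with hu
    -- u ∈ X
    have huX : u ∈ X := by
      have hwX : xbar + (r/d) • (y - x) ∈ X := by
        refine (hball ?_).1
        simp only [mem_closedBall, dist_eq_norm]
        have h1 : xbar + (r/d) • (y - x) - xbar = (r/d) • (y - x) := by abel
        rw [h1, norm_smul, Real.norm_eq_abs, abs_of_pos (by positivity),
          norm_sub_rev, ← hd, div_mul_cancel₀ _ hdne]
      have := hXconv hx hwX (by positivity : (0:ℝ) ≤ 2*r/s)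
        (by positivity : (0:ℝ) ≤ d/s) (by field_simp; ring)
      convert this using 1
      rw [hu, hs]
      match_scalars <;> (field_simp; try ring)
    -- u ∈ Y
    have huY : u ∈ Y := by
      have hwY : xbar + (r/d) • (x - y) ∈ Y := by
        refine (hball ?_).2
        simp only [mem_closedBall, dist_eq_norm]
        have h1 : xbar + (r/d) • (x - y) - xbar = (r/d) • (x - y) := by abel
        rw [h1, norm_smul, Real.norm_eq_abs, abs_of_pos (by positivity),
          ← hd, div_mul_cancel₀ _ hdne]
      have := hYconv hy hwY (by positivity : (0:ℝ) ≤ 2*r/s)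
        (by positivity : (0:ℝ) ≤ d/s) (by field_simp; ring)
      convert this using 1
      rw [hu, hs]
      match_scalars <;> (field_simp; try ring)
    -- norm bounds
    have hxu : ‖x - u‖ ≤ (r/s) * d + (d/s) * a := by
      have h1 : x - u = (r/s) • (x - y) + (d/s) • (x - xbar) := by
        rw [hu, hs]
        match_scalars <;> (field_simp; try ring)
      rw [h1]
      calc ‖(r/s) • (x - y) + (d/s) • (x - xbar)‖
          ≤ ‖(r/s) • (x - y)‖ + ‖(d/s) • (x - xbar)‖ := norm_add_le _ _
        _ = (r/s) * d + (d/s) * a := by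
            rw [norm_smul, norm_smul, Real.norm_eq_abs, Real.norm_eq_abs,
              abs_of_pos (by positivity), abs_of_pos (by positivity), ← hd, ← ha]
    have hyu : ‖y - u‖ ≤ (r/s) * d + (d/s) * b := by
      have h1 : y - u = (r/s) • (y - x) + (d/s) • (y - xbar) := by
        rw [hu, hs]
        match_scalars <;> (field_simp; try ring)
      rw [h1]
      calc ‖(r/s) • (y - x) + (d/s) • (y - xbar)‖
          ≤ ‖(r/s) • (y - x)‖ + ‖(d/s) • (y - xbar)‖ := norm_add_le _ _
        _ = (r/s) * d + (d/s) * b := by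
            rw [norm_smul, norm_smul, Real.norm_eq_abs, Real.norm_eq_abs,
              abs_of_pos (by positivity), abs_of_pos (by positivity),
              norm_sub_rev, ← hd, ← hb]
    -- distance to the diagonal point
    have hmem : e (u, u) ∈ L := by
      rw [hL]; exact ⟨u, ⟨huX, huY⟩, rfl⟩
    have hdist : dist (e (x, y)) (e (u, u)) = Real.sqrt (‖x - u‖ ^ 2 + ‖y - u‖ ^ 2) := by
      rw [WithLp.prod_dist_eq_of_L2]
      simp only [dist_eq_norm]
      rfl
    have hsqrt : Real.sqrt (‖x - u‖ ^ 2 + ‖y - u‖ ^ 2) ≤ ‖x - u‖ + ‖y - u‖ := by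
      have h1 : ‖x - u‖ ^ 2 + ‖y - u‖ ^ 2 ≤ (‖x - u‖ + ‖y - u‖) ^ 2 := by
        nlinarith [norm_nonneg (x - u), norm_nonneg (y - u)]
      calc Real.sqrt (‖x - u‖ ^ 2 + ‖y - u‖ ^ 2)
          ≤ Real.sqrt ((‖x - u‖ + ‖y - u‖) ^ 2) := Real.sqrt_le_sqrt h1
        _ = ‖x - u‖ + ‖y - u‖ := Real.sqrt_sq (by positivity)
    calc infDist (e (x, y)) L ≤ dist (e (x, y)) (e (u, u)) := infDist_le_dist_of_mem hmem
      _ = Real.sqrt (‖x - u‖ ^ 2 + ‖y - u‖ ^ 2) := hdist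
      _ ≤ ‖x - u‖ + ‖y - u‖ := hsqrt
      _ ≤ ((r/s) * d + (d/s) * a) + ((r/s) * d + (d/s) * b) := add_le_add hxu hyu
      _ ≤ (1 + (a + b) / r) * d := by
          rw [hs]
          have h2pos : (0:ℝ) < d + 2 * r := by positivity
          have k1 : r/(d+2*r)*d + r/(d+2*r)*d ≤ d := by
            rw [div_mul_eq_mul_div, ← add_div, div_le_iff₀ h2pos]
            nlinarith
          have k2 : d/(d+2*r) ≤ d/r :=
            div_le_div_of_nonneg_left hd0 hr (by linarith)
          have h3 := mul_le_mul_of_nonneg_right k2 ha0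
          have h4 := mul_le_mul_of_nonneg_right k2 hb0
          have h5 : (1 + (a + b) / r) * d = d + d/r*a + d/r*b := by
            field_simp; ring
          linarith
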